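/- The family F consisting of all sets A ⊆ ℕ with lower asymptotic density 1, together with all sets A ⊆ ℕ such that A ∩ Δ(X) ≠ ∅ for every infinite X ⊆ ℕ, has the finite intersection property. -/

import Mathlib

open scoped Classical

noncomputable def upperDensity (A : Set ℕ) : ℝ :=
  Filter.limsup (fun n => (((Finset.Icc 1 n).filter (fun m => m ∈ A)).card : ℝ) / n) Filter.atTop

noncomputable def lowerDensity (A : Set ℕ) : ℝ :=
  Filter.liminf (fun n => (((Finset.Icc 1 n).filter (fun m => m ∈ A)).card : ℝ) / n) Filter.atTop

/-- The difference set Δ(X) = {x' - x : x, x' ∈ X, x' > x}. -/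
def diffSet (X : Set ℕ) : Set ℕ := {d | ∃ x ∈ X, ∃ x' ∈ X, x < x' ∧ x' - x = d}

/-- A is thick if it contains arbitrarily long intervals of consecutive integers. -/
def Thick (A : Set ℕ) : Prop := ∀ k : ℕ, ∃ a : ℕ, ∀ i < k, a + i ∈ A

/-- A is a Δ-set if it contains the difference set of some infinite X. -/
def IsDeltaSet (A : Set ℕ) : Prop := ∃ X : Set ℕ, X.Infinite ∧ diffSet X ⊆ A

open Filter

noncomputable def densSeq (A : Set ℕ) : ℕ → ℝ :=
  fun n => (((Finset.Icc 1 n).filter (fun m => m ∈ A)).card : ℝ) / n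

lemma densSeq_eq (A : Set ℕ) (n : ℕ) [DecidablePred (· ∈ A)] :
    densSeq A n = (((Finset.Icc 1 n).filter (fun m => m ∈ A)).card : ℝ) / n := by
  unfold densSeq
  rw [Finset.filter_congr_decidable]

lemma densSeq_nonneg (A : Set ℕ) (n : ℕ) : 0 ≤ densSeq A n := by
  unfold densSeq; positivity

lemma densSeq_le_one (A : Set ℕ) (n : ℕ) (hn : 1 ≤ n) : densSeq A n ≤ 1 := by
  unfold densSeq
  rw [div_le_one (by exact_mod_cast hn)]
  have : ((Finset.Icc 1 n).filter (fun m => m ∈ A)).card ≤ n := by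
    calc ((Finset.Icc 1 n).filter (fun m => m ∈ A)).card ≤ (Finset.Icc 1 n).card :=
          Finset.card_filter_le _ _
      _ = n := by rw [Nat.card_Icc]; omega
  exact_mod_cast this

lemma tendsto_densSeq (A : Set ℕ)
    (h : Filter.liminf (fun n => (((Finset.Icc 1 n).filter (fun m => m ∈ A)).card : ℝ) / n) Filter.atTop = 1) :
    Tendsto (densSeq A) atTop (nhds 1) := by
  have hb : IsBoundedUnder (· ≤ ·) atTop (densSeq A) :=
    ⟨1, eventually_atTop.2 ⟨1, fun n hn => densSeq_le_one A n hn⟩⟩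
  have hb' : IsBoundedUnder (· ≥ ·) atTop (densSeq A) :=
    ⟨0, eventually_map.2 (Eventually.of_forall fun n => densSeq_nonneg A n)⟩
  refine tendsto_of_le_liminf_of_limsup_le ?_ ?_ hb hb'
  · exact le_of_eq h.symm
  · exact limsup_le_of_le hb'.isCoboundedUnder_le
      (eventually_atTop.2 ⟨1, fun n hn => densSeq_le_one A n hn⟩)

lemma lowerDensity_of_tendsto (A : Set ℕ) (h : Tendsto (densSeq A) atTop (nhds 1)) :
    Filter.liminf (fun n => (((Finset.Icc 1 n).filter (fun m => m ∈ A)).card : ℝ) / n) Filter.atTop = 1 :=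
  h.liminf_eq

lemma densSeq_inter (A B : Set ℕ) (n : ℕ) (hn : 1 ≤ n) :
    densSeq A n + densSeq B n - 1 ≤ densSeq (A ∩ B) n := by
  have key : ((Finset.Icc 1 n).filter (fun m => m ∈ A)).card
      + ((Finset.Icc 1 n).filter (fun m => m ∈ B)).card
      ≤ ((Finset.Icc 1 n).filter (fun m => m ∈ A ∩ B)).card + n := by
    have h1 := Finset.card_union_add_card_inter
      ((Finset.Icc 1 n).filter (fun m => m ∈ A)) ((Finset.Icc 1 n).filter (fun m => m ∈ B))
    have h2 : ((Finset.Icc 1 n).filter (fun m => m ∈ A)) ∩ ((Finset.Icc 1 n).filter (fun m => m ∈ B))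
        = (Finset.Icc 1 n).filter (fun m => m ∈ A ∩ B) := by
      ext m; simp [Set.mem_inter_iff]; tauto
    rw [h2] at h1
    have h3 : (((Finset.Icc 1 n).filter (fun m => m ∈ A)) ∪ ((Finset.Icc 1 n).filter (fun m => m ∈ B))).card ≤ n := by
      calc _ ≤ (Finset.Icc 1 n).card := Finset.card_le_card (by
              intro x hx; simp only [Finset.mem_union, Finset.mem_filter] at hx; tauto)
        _ = n := by rw [Nat.card_Icc]; omega
    omega
  classical
  have hn' : (0:ℝ) < n := by exact_mod_cast hn
  rw [densSeq_eq A, densSeq_eq B, densSeq_eq (A ∩ B)]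
  rw [← add_div, sub_le_iff_le_add]
  have key' : (((Finset.Icc 1 n).filter (fun m => m ∈ A)).card : ℝ)
      + ((Finset.Icc 1 n).filter (fun m => m ∈ B)).card
      ≤ ((Finset.Icc 1 n).filter (fun m => m ∈ A ∩ B)).card + n := by exact_mod_cast key
  have h4 : ((((Finset.Icc 1 n).filter (fun m => m ∈ A)).card : ℝ)
      + ((Finset.Icc 1 n).filter (fun m => m ∈ B)).card) / n
      ≤ ((((Finset.Icc 1 n).filter (fun m => m ∈ A ∩ B)).card : ℝ) + n) / n := by
    gcongr
  have h5 : ((((Finset.Icc 1 n).filter (fun m => m ∈ A ∩ B)).card : ℝ) + n) / n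
      = (((Finset.Icc 1 n).filter (fun m => m ∈ A ∩ B)).card : ℝ) / n + 1 := by
    rw [add_div, div_self hn'.ne']
  have h6 := fun c : ℝ => (add_div ((((Finset.Icc 1 n).filter (fun m => m ∈ A)).card : ℝ))
    ((((Finset.Icc 1 n).filter (fun m => m ∈ B)).card : ℝ)) c).symm
  rw [← h5]; exact h4

lemma tendsto_densSeq_inter (A B : Set ℕ) (hA : Tendsto (densSeq A) atTop (nhds 1))
    (hB : Tendsto (densSeq B) atTop (nhds 1)) :
    Tendsto (densSeq (A ∩ B)) atTop (nhds 1) := by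
  have hlow : Tendsto (fun n => densSeq A n + densSeq B n - 1) atTop (nhds 1) := by
    have := (hA.add hB).sub_const 1
    simpa using this
  refine tendsto_of_tendsto_of_tendsto_of_le_of_le' hlow tendsto_const_nhds
    (eventually_atTop.2 ⟨1, fun n hn => densSeq_inter A B n hn⟩)
    (eventually_atTop.2 ⟨1, fun n hn => densSeq_le_one _ n hn⟩)

lemma tendsto_densSeq_univ : Tendsto (densSeq Set.univ) atTop (nhds 1) := by
  have : ∀ n : ℕ, 1 ≤ n → densSeq Set.univ n = 1 := by
    intro n hn
    classical
    have hpos : (0:ℝ) < n := by exact_mod_cast hn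
    rw [densSeq_eq]
    simp only [Set.mem_univ, Finset.filter_true, Nat.card_Icc, Nat.add_sub_cancel]
    field_simp
  refine Tendsto.congr' ?_ tendsto_const_nhds
  filter_upwards [eventually_atTop.2 ⟨1, fun n hn => hn⟩] with n hn
  exact (this n hn).symm

lemma ramsey_pairs (c : ℕ → ℕ → Bool) (X : Set ℕ) (hX : X.Infinite) :
    ∃ Y, Y ⊆ X ∧ Y.Infinite ∧ ∃ b, ∀ x ∈ Y, ∀ y ∈ Y, x < y → c x y = b := by
  have step : ∀ S : Set ℕ, S.Infinite → ∃ x, x ∈ S ∧ ∃ T, T ⊆ S ∧ T.Infinite ∧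
      (∀ y ∈ T, x < y) ∧ ∃ b, ∀ y ∈ T, c x y = b := by
    intro S hS
    obtain ⟨x, hx⟩ := hS.nonempty
    have hT0 : (S ∩ {y | x < y}).Infinite := by
      have he : S ∩ {y | x < y} = S \ Set.Iic x := by
        ext y; simp [Set.mem_Iic, not_le]
      rw [he]; exact hS.diff (Set.finite_Iic x)
    have hsplit : (S ∩ {y | x < y}) =
        {y ∈ S ∩ {y | x < y} | c x y = true} ∪ {y ∈ S ∩ {y | x < y} | c x y = false} := by
      ext y
      rcases Bool.eq_false_or_eq_true (c x y) with h | h <;>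
        simp [Set.mem_setOf_eq, h]
    rw [hsplit, Set.infinite_union] at hT0
    rcases hT0 with h | h
    · exact ⟨x, hx, _, fun y hy => hy.1.1, h, fun y hy => hy.1.2, true, fun y hy => hy.2⟩
    · exact ⟨x, hx, _, fun y hy => hy.1.1, h, fun y hy => hy.1.2, false, fun y hy => hy.2⟩
  choose xf hxf Tf hTsub hTinf hlt bf hb using step
  let Sseq : ℕ → {S : Set ℕ // S.Infinite} := fun n =>
    Nat.rec ⟨X, hX⟩ (fun _ p => ⟨Tf p.1 p.2, hTinf p.1 p.2⟩) n
  set xs : ℕ → ℕ := fun n => xf (Sseq n).1 (Sseq n).2 with hxs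
  set bs : ℕ → Bool := fun n => bf (Sseq n).1 (Sseq n).2 with hbs
  have hSsucc : ∀ n, (Sseq (n+1)).1 = Tf (Sseq n).1 (Sseq n).2 := fun n => rfl
  have hsub : ∀ n, (Sseq (n+1)).1 ⊆ (Sseq n).1 := fun n => by
    rw [hSsucc]; exact hTsub _ _
  have hchain : ∀ n m, n ≤ m → (Sseq m).1 ⊆ (Sseq n).1 := by
    intro n m hnm
    induction m, hnm using Nat.le_induction with
    | base => exact subset_rfl
    | succ m hnm ih => exact (hsub m).trans ih
  have hsubX : ∀ n, (Sseq n).1 ⊆ X := fun n => hchain 0 n (Nat.zero_le n)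
  have hmem : ∀ n, xs n ∈ (Sseq n).1 := fun n => hxf _ _
  have key : ∀ n m, n < m → xs n < xs m ∧ c (xs n) (xs m) = bs n := by
    intro n m hnm
    have h1 : xs m ∈ (Sseq (n+1)).1 := hchain (n+1) m hnm (hmem m)
    rw [hSsucc] at h1
    exact ⟨hlt _ _ _ h1, hb _ _ _ h1⟩
  obtain ⟨b, I, hI, hIb⟩ : ∃ (b : Bool) (I : Set ℕ), I.Infinite ∧ ∀ n ∈ I, bs n = b := by
    by_cases h : {n | bs n = true}.Infinite
    · exact ⟨true, _, h, fun n hn => hn⟩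
    · refine ⟨false, {n | bs n = true}ᶜ, (Set.not_infinite.1 h).infinite_compl, fun n hn => ?_⟩
      simpa using hn
  have hmono : StrictMono xs := fun n m hnm => (key n m hnm).1
  refine ⟨xs '' I, ?_, hI.image (hmono.injective.injOn), b, ?_⟩
  · rintro _ ⟨n, _, rfl⟩; exact hsubX n (hmem n)
  · rintro _ ⟨n, hn, rfl⟩ _ ⟨m, hm, rfl⟩ hlt'
    have hnm : n < m := hmono.lt_iff_lt.1 hlt'
    rw [(key n m hnm).2, hIb n hn]

lemma deltaStar_refine (A : Set ℕ)
    (hA : ∀ X : Set ℕ, X.Infinite → (A ∩ diffSet X).Nonempty)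
    (X : Set ℕ) (hX : X.Infinite) :
    ∃ Y, Y ⊆ X ∧ Y.Infinite ∧ diffSet Y ⊆ A := by
  obtain ⟨Y, hYX, hYinf, b, hbY⟩ :=
    ramsey_pairs (fun x y => if (y - x) ∈ A then true else false) X hX
  have hbtrue : b = true := by
    by_contra hbf
    obtain ⟨d, hdA, x, hx, x', hx', hxx', hd⟩ := hA Y hYinf
    have := hbY x hx x' hx' hxx'
    rw [hd] at this
    simp [hdA] at this
    exact hbf this
  refine ⟨Y, hYX, hYinf, ?_⟩
  rintro d ⟨x, hx, x', hx', hxx', rfl⟩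
  have := hbY x hx x' hx' hxx'
  rw [hbtrue] at this
  by_contra hd
  simp [hd] at this

lemma thick_diffSet (D : Set ℕ) (hD : Thick D) :
    ∃ X : Set ℕ, X.Infinite ∧ diffSet X ⊆ D := by
  choose f hf using hD
  let x : ℕ → ℕ := fun n => Nat.rec 0 (fun _ xn => f (xn + 2) + 1 + xn) n
  have hxsucc : ∀ n, x (n+1) = f (x n + 2) + 1 + x n := fun n => rfl
  have hmono : StrictMono x := strictMono_nat_of_lt_succ (fun n => by rw [hxsucc]; omega)
  have hkey : ∀ n, ∀ y, y ≤ x n → x (n+1) - y ∈ D := by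
    intro n y hy
    have h1 : x (n+1) - y = f (x n + 2) + (1 + x n - y) := by rw [hxsucc]; omega
    rw [h1]
    exact hf (x n + 2) (1 + x n - y) (by omega)
  refine ⟨Set.range x, Set.infinite_range_of_injective hmono.injective, ?_⟩
  rintro d ⟨_, ⟨n, rfl⟩, _, ⟨m, rfl⟩, hlt, rfl⟩
  have hnm : n < m := hmono.lt_iff_lt.1 hlt
  obtain ⟨k, rfl⟩ : ∃ k, m = k + 1 := ⟨m - 1, by omega⟩
  exact hkey k (x n) (hmono.monotone (by omega))

lemma thick_of_tendsto (D : Set ℕ) (h : Tendsto (densSeq D) atTop (nhds 1)) :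
    Thick D := by
  by_contra hth
  unfold Thick at hth
  push_neg at hth
  obtain ⟨k, hk⟩ := hth
  have hk1 : 1 ≤ k := by
    rcases hk 0 with ⟨i, hi, _⟩; omega
  choose g hg hgD using hk
  have count : ∀ m : ℕ, 1 ≤ m →
      (((Finset.Icc 1 (k*m)).filter (fun x => x ∈ D)).card) + m ≤ k*m := by
    intro m hm
    have hlt : ∀ j1 j2 : ℕ, j1 < j2 →
        j1*k + 1 + g (j1*k+1) < j2*k + 1 + g (j2*k+1) := by
      intro j1 j2 hj
      calc j1*k + 1 + g (j1*k+1) < j1*k + 1 + k := Nat.add_lt_add_left (hg _) _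
        _ = (j1+1)*k + 1 := by ring
        _ ≤ j2*k + 1 := Nat.add_le_add_right (Nat.mul_le_mul_right k (by omega)) 1
        _ ≤ j2*k + 1 + g (j2*k+1) := Nat.le_add_right _ _
    set miss := (Finset.range m).image (fun j => j*k + 1 + g (j*k+1)) with hmiss
    have hcardmiss : miss.card = m := by
      rw [hmiss, Finset.card_image_of_injOn, Finset.card_range]
      intro j1 _ j2 _ he
      rcases lt_trichotomy j1 j2 with hj | hj | hj
      · exact absurd he (Nat.ne_of_lt (hlt _ _ hj))
      · exact hj
      · exact absurd he.symm (Nat.ne_of_lt (hlt _ _ hj))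
    have hsub : miss ⊆ (Finset.Icc 1 (k*m)).filter (fun x => x ∉ D) := by
      intro x hx
      rw [hmiss, Finset.mem_image] at hx
      obtain ⟨j, hj, rfl⟩ := hx
      rw [Finset.mem_range] at hj
      refine Finset.mem_filter.2 ⟨Finset.mem_Icc.2 ⟨by omega, ?_⟩, hgD _⟩
      calc j*k + 1 + g (j*k+1) ≤ j*k + 1 + (k-1) := by
            have := hg (j*k+1); omega
        _ ≤ (j+1)*k := by
            have h1 : (j+1)*k = j*k + k := by ring
            omega
        _ ≤ m*k := Nat.mul_le_mul_right k (by omega)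
        _ = k*m := Nat.mul_comm _ _
    have h1 : m ≤ ((Finset.Icc 1 (k*m)).filter (fun x => x ∉ D)).card := by
      have := Finset.card_le_card hsub
      rwa [hcardmiss] at this
    have h2 := Finset.card_filter_add_card_filter_not
      (s := Finset.Icc 1 (k*m)) (p := fun x => x ∈ D)
    have h3 : (Finset.Icc 1 (k*m)).card = k*m := by rw [Nat.card_Icc]; omega
    omega
  have hev : ∀ᶠ n in atTop, 1 - 1/(k:ℝ) < densSeq D n := by
    apply h.eventually (eventually_gt_nhds ?_)
    have : (0:ℝ) < 1/(k:ℝ) := by positivity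
    linarith
  obtain ⟨N, hN⟩ := eventually_atTop.1 hev
  set m := N + 1
  have hm1 : 1 ≤ m := by omega
  have hn : N ≤ k * m := by
    calc N ≤ m := by omega
      _ ≤ k * m := Nat.le_mul_of_pos_left m (by omega)
  have hbig := hN (k*m) hn
  have hkm : (0:ℝ) < (k:ℝ) * m := by
    have : (0:ℝ) < (k:ℝ) := by exact_mod_cast hk1
    have : (0:ℝ) < (m:ℝ) := by exact_mod_cast hm1
    positivity
  have hle : densSeq D (k*m) ≤ 1 - 1/(k:ℝ) := by
    classical
    rw [densSeq_eq]
    have hc := count m hm1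
    have hc' : ((((Finset.Icc 1 (k*m)).filter (fun x => x ∈ D)).card : ℝ))
        ≤ (k:ℝ)*m - m := by
      have : (((Finset.Icc 1 (k*m)).filter (fun x => x ∈ D)).card : ℝ) + m ≤ (k:ℝ)*m := by
        exact_mod_cast count m hm1
      linarith
    rw [show ((k*m : ℕ) : ℝ) = (k:ℝ)*m by push_cast; ring]
    rw [div_le_iff₀ hkm]
    have hk0 : (k:ℝ) ≠ 0 := by
      have : (0:ℝ) < (k:ℝ) := by exact_mod_cast hk1
      linarith
    have : (1 - 1/(k:ℝ)) * ((k:ℝ)*m) = (k:ℝ)*m - m := by field_simp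
    rw [this]
    exact hc'
  linarith

lemma diffSet_mono {X Y : Set ℕ} (h : X ⊆ Y) : diffSet X ⊆ diffSet Y := by
  rintro d ⟨x, hx, x', hx', hlt, rfl⟩
  exact ⟨x, h hx, x', h hx', hlt, rfl⟩

lemma sInter_density (H : Finset (Set ℕ))
    (h : ∀ A ∈ H, Tendsto (densSeq A) atTop (nhds 1)) :
    Tendsto (densSeq (⋂₀ (↑H : Set (Set ℕ)))) atTop (nhds 1) := by
  induction H using Finset.induction_on with
  | empty => rw [Finset.coe_empty, Set.sInter_empty]; exact tendsto_densSeq_univ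
  | @insert A s hA ih =>
    rw [Finset.coe_insert, Set.sInter_insert]
    exact tendsto_densSeq_inter _ _ (h A (Finset.mem_insert_self _ _))
      (ih fun B hB => h B (Finset.mem_insert_of_mem hB))

lemma refine_all (H : Finset (Set ℕ))
    (h : ∀ B ∈ H, ∀ X : Set ℕ, X.Infinite → (B ∩ diffSet X).Nonempty) :
    ∀ X : Set ℕ, X.Infinite → ∃ Y, Y ⊆ X ∧ Y.Infinite ∧ ∀ B ∈ H, diffSet Y ⊆ B := by
  induction H using Finset.induction_on with
  | empty => exact fun X hX => ⟨X, subset_rfl, hX, by simp⟩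
  | @insert A s hA ih =>
    intro X hX
    obtain ⟨Y, hYX, hYinf, hYs⟩ := ih (fun B hB => h B (Finset.mem_insert_of_mem hB)) X hX
    obtain ⟨Z, hZY, hZinf, hZA⟩ :=
      deltaStar_refine A (h A (Finset.mem_insert_self _ _)) Y hYinf
    refine ⟨Z, hZY.trans hYX, hZinf, fun B hB => ?_⟩
    rcases Finset.mem_insert.1 hB with rfl | hB
    · exact hZA
    · exact (diffSet_mono hZY).trans (hYs B hB)

theorem stmt6 :
    ∀ G : Finset (Set ℕ),
      (↑G : Set (Set ℕ)) ⊆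
        ({A | lowerDensity A = 1} ∪
         {A | ∀ X : Set ℕ, X.Infinite → (A ∩ diffSet X).Nonempty}) →
      (⋂₀ (↑G : Set (Set ℕ))).Nonempty := by
  intro G hG
  classical
  set G1 := G.filter (fun A => lowerDensity A = 1) with hG1
  have hD : Tendsto (densSeq (⋂₀ (↑G1 : Set (Set ℕ)))) atTop (nhds 1) := by
    refine sInter_density _ (fun A hA => tendsto_densSeq A ?_)
    exact (Finset.mem_filter.1 hA).2
  have hthick : Thick (⋂₀ (↑G1 : Set (Set ℕ))) := thick_of_tendsto _ hD
  obtain ⟨X0, hX0inf, hX0⟩ := thick_diffSet _ hthick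
  set G2 := G.filter (fun A => ¬ lowerDensity A = 1) with hG2
  have hG2' : ∀ B ∈ G2, ∀ X : Set ℕ, X.Infinite → (B ∩ diffSet X).Nonempty := by
    intro B hB
    obtain ⟨hBG, hBnd⟩ := Finset.mem_filter.1 hB
    rcases hG hBG with h | h
    · exact absurd h hBnd
    · exact h
  obtain ⟨Y, hYX0, hYinf, hYB⟩ := refine_all G2 hG2' X0 hX0inf
  obtain ⟨x, hx, y, hy, hxy⟩ := hYinf.nontrivial
  have hd : (diffSet Y).Nonempty := by
    rcases hxy.lt_or_gt with hlt | hlt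
    · exact ⟨y - x, x, hx, y, hy, hlt, rfl⟩
    · exact ⟨x - y, y, hy, x, hx, hlt, rfl⟩
  obtain ⟨d, hdY⟩ := hd
  refine ⟨d, fun A hA => ?_⟩
  by_cases h1 : lowerDensity A = 1
  · have hmem : A ∈ (↑G1 : Set (Set ℕ)) :=
      Finset.mem_coe.2 (Finset.mem_filter.2 ⟨Finset.mem_coe.1 hA, h1⟩)
    exact Set.sInter_subset_of_mem hmem (hX0 (diffSet_mono hYX0 hdY))
  · exact hYB A (Finset.mem_filter.2 ⟨Finset.mem_coe.1 hA, h1⟩) hdY
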